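/- Let (φ, ξ, η) be a smooth almost contact structure on U which is normal, i.e. N_φ(X,Y) = [φ,φ](X,Y) + dη(X,Y)·ξ = 0 for all smooth vector fields X, Y on U. Then φ[ξ, X] = [ξ, φX] for every smooth vector field X on U, where ξ is regarded as the smooth vector field x ↦ ξ_x. -/

import Mathlib

open VectorField

/-- The Nijenhuis tensor `N_φ(X,Y)` of a smooth almost contact structure `(φ, ξ, η)`
at a point `x`:
`N_φ(X,Y) = [φX, φY] + φ(φ[X,Y]) − φ[φX, Y] − φ[X, φY] + dη(X,Y)·ξ`, where
`dη(X,Y) = X(η(Y)) − Y(η(X)) − η([X,Y])`. -/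
noncomputable def almostContactNijenhuis {E : Type*} [NormedAddCommGroup E]
    [NormedSpace ℝ E] (φ : E → (E →L[ℝ] E)) (ξ : E → E) (η : E → (E →L[ℝ] ℝ))
    (X Y : E → E) (x : E) : E :=
  lieBracket ℝ (fun y => φ y (X y)) (fun y => φ y (Y y)) x
    + φ x (φ x (lieBracket ℝ X Y x))
    - φ x (lieBracket ℝ (fun y => φ y (X y)) Y x)
    - φ x (lieBracket ℝ X (fun y => φ y (Y y)) x)
    + (fderiv ℝ (fun y => η y (Y y)) x (X x)
        - fderiv ℝ (fun y => η y (X y)) x (Y x)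
        - η x (lieBracket ℝ X Y x)) • ξ x

/-- Pointwise algebra: `φ ξ = 0` and `η ∘ φ = 0`. -/
lemma aux_acs_pointwise {E : Type*} [NormedAddCommGroup E] [NormedSpace ℝ E]
    (φ : E →L[ℝ] E) (ξ : E) (η : E →L[ℝ] ℝ)
    (hηξ : η ξ = 1) (hφφ : ∀ v : E, φ (φ v) = -v + η v • ξ) :
    φ ξ = 0 ∧ ∀ v : E, η (φ v) = 0 := by
  have hR : ∀ v : E, η (φ v) • ξ = η v • φ ξ := by
    intro v
    have h1 : φ (φ (φ v)) = -(φ v) + η (φ v) • ξ := hφφ (φ v)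
    have h2 : φ (φ (φ v)) = -(φ v) + η v • φ ξ := by
      rw [hφφ v]; simp
    exact add_right_injective _ (h1.symm.trans h2)
  have hφξ : φ ξ = η (φ ξ) • ξ := by
    have := hR ξ; rw [hηξ, one_smul] at this; exact this.symm
  have h0 : φ (φ ξ) = 0 := by rw [hφφ ξ, hηξ, one_smul]; abel
  have h0' : (η (φ ξ) * η (φ ξ)) • ξ = 0 := by
    calc (η (φ ξ) * η (φ ξ)) • ξ = η (φ ξ) • (η (φ ξ) • ξ) := (smul_smul _ _ _).symm
      _ = η (φ ξ) • φ ξ := by rw [← hφξ]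
      _ = φ (η (φ ξ) • ξ) := (map_smul _ _ _).symm
      _ = φ (φ ξ) := by rw [← hφξ]
      _ = 0 := h0
  have hξ0 : ξ ≠ 0 := by
    intro h; rw [h] at hηξ; simp at hηξ
  have hc : η (φ ξ) = 0 := by
    rcases smul_eq_zero.1 h0' with h | h
    · exact mul_self_eq_zero.1 h
    · exact absurd h hξ0
  have h1 : φ ξ = 0 := by rw [hφξ, hc, zero_smul]
  refine ⟨h1, fun v => ?_⟩
  have h2 := hR v
  rw [h1, smul_zero] at h2
  have h3 := congrArg η h2
  rw [map_smul, map_zero, hηξ, smul_eq_mul, mul_one] at h3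
  exact h3

/-- If a smooth almost contact structure `(φ, ξ, η)` on an open set `U` is normal,
then `φ[ξ, X] = [ξ, φX]` for every smooth vector field `X` on `U`. -/
theorem normal_almostContact_phi_lieBracket_xi
    {E : Type*} [NormedAddCommGroup E] [NormedSpace ℝ E] [FiniteDimensional ℝ E]
    (U : Set E) (hU : IsOpen U)
    (φ : E → (E →L[ℝ] E)) (ξ : E → E) (η : E → (E →L[ℝ] ℝ))
    (hφ : ContDiffOn ℝ (⊤ : ℕ∞) φ U) (hξ : ContDiffOn ℝ (⊤ : ℕ∞) ξ U)
    (hη : ContDiffOn ℝ (⊤ : ℕ∞) η U)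
    (hηξ : ∀ x ∈ U, η x (ξ x) = 1)
    (hφφ : ∀ x ∈ U, ∀ v : E, φ x (φ x v) = -v + η x v • ξ x)
    (hnormal : ∀ X Y : E → E, ContDiffOn ℝ (⊤ : ℕ∞) X U → ContDiffOn ℝ (⊤ : ℕ∞) Y U →
      ∀ x ∈ U, almostContactNijenhuis φ ξ η X Y x = 0) :
    ∀ X : E → E, ContDiffOn ℝ (⊤ : ℕ∞) X U → ∀ x ∈ U,
      φ x (lieBracket ℝ ξ X x) = lieBracket ℝ ξ (fun y => φ y (X y)) x := by
  intro X hX x hx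
  have hxU : U ∈ nhds x := hU.mem_nhds hx
  have haux : ∀ y ∈ U, φ y (ξ y) = 0 ∧ ∀ v : E, η y (φ y v) = 0 :=
    fun y hy => aux_acs_pointwise (φ y) (ξ y) (η y) (hηξ y hy) (hφφ y hy)
  have hXd : DifferentiableAt ℝ X x :=
    (hX.differentiableOn (by simp)).differentiableAt hxU
  have hξd : DifferentiableAt ℝ ξ x :=
    (hξ.differentiableOn (by simp)).differentiableAt hxU
  have hfS : ContDiffOn ℝ (⊤ : ℕ∞) (fun y => η y (X y)) U := hη.clm_apply hX
  have hfd : DifferentiableAt ℝ (fun y => η y (X y)) x :=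
    (hfS.differentiableOn (by simp)).differentiableAt hxU
  have hY : ContDiffOn ℝ (⊤ : ℕ∞) (fun y => φ y (X y)) U := hφ.clm_apply hX
  have hYd : DifferentiableAt ℝ (fun y => φ y (X y)) x :=
    (hY.differentiableOn (by simp)).differentiableAt hxU
  set Y : E → E := fun y => φ y (X y) with hYdef
  have eφξ : (fun y => φ y (ξ y)) =ᶠ[nhds x] (fun _ => (0 : E)) :=
    Filter.eventually_of_mem hxU (fun y hy => (haux y hy).1)
  have dφξ : fderiv ℝ (fun y => φ y (ξ y)) x = 0 := by
    rw [eφξ.fderiv_eq]; exact fderiv_const_apply 0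
  have vφξ : φ x (ξ x) = 0 := (haux x hx).1
  have eηY : (fun y => η y (Y y)) =ᶠ[nhds x] (fun _ => (0 : ℝ)) :=
    Filter.eventually_of_mem hxU (fun y hy => (haux y hy).2 (X y))
  have dηY : fderiv ℝ (fun y => η y (Y y)) x = 0 := by
    rw [eηY.fderiv_eq]; exact fderiv_const_apply 0
  have eηξ : (fun y => η y (ξ y)) =ᶠ[nhds x] (fun _ => (1 : ℝ)) :=
    Filter.eventually_of_mem hxU (fun y hy => hηξ y hy)
  have dηξ : fderiv ℝ (fun y => η y (ξ y)) x = 0 := by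
    rw [eηξ.fderiv_eq]; exact fderiv_const_apply 1
  have eφY : (fun y => φ y (Y y)) =ᶠ[nhds x]
      (fun y => η y (X y) • ξ y - X y) :=
    Filter.eventually_of_mem hxU (fun y hy => by
      simp only [hYdef, hφφ y hy (X y)]; abel)
  have dφY : fderiv ℝ (fun y => φ y (Y y)) x =
      (η x (X x) • fderiv ℝ ξ x + (fderiv ℝ (fun y => η y (X y)) x).smulRight (ξ x))
        - fderiv ℝ X x := by
    rw [eφY.fderiv_eq, fderiv_fun_sub (hfd.fun_smul hξd) hXd, fderiv_fun_smul hfd hξd]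
  set A : E := lieBracket ℝ ξ X x with hA
  set B : E := lieBracket ℝ ξ Y x with hB
  set c : ℝ := fderiv ℝ (fun y => η y (X y)) x (ξ x) with hc
  have hbr : lieBracket ℝ ξ (fun y => φ y (Y y)) x = c • ξ x - A := by
    rw [lieBracket, dφY]
    have hval : φ x (Y x) = -(X x) + η x (X x) • ξ x := hφφ x hx (X x)
    rw [hval]
    simp only [ContinuousLinearMap.sub_apply, ContinuousLinearMap.add_apply,
      ContinuousLinearMap.smul_apply, ContinuousLinearMap.smulRight_apply,
      map_add, map_neg, map_smul, hA, lieBracket, hc]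
    abel
  have hnorm := hnormal ξ Y hξ hY x hx
  rw [almostContactNijenhuis] at hnorm
  have h1 : lieBracket ℝ (fun y => φ y (ξ y)) (fun y => φ y (Y y)) x = 0 := by
    simp [lieBracket, dφξ, vφξ]
  have h3 : lieBracket ℝ (fun y => φ y (ξ y)) Y x = 0 := by
    simp [lieBracket, dφξ, vφξ]
  rw [h1, h3, hbr, dηξ, dηY] at hnorm
  rw [← hB] at hnorm
  have hφφB : φ x (φ x B) = -B + η x B • ξ x := hφφ x hx B
  rw [hφφB] at hnorm
  simp only [map_sub, map_smul, vφξ, smul_zero, map_zero,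
    ContinuousLinearMap.zero_apply] at hnorm
  have hcoef : ((0 : ℝ) - 0 - η x B) = -(η x B) := by ring
  rw [hcoef, neg_smul] at hnorm
  have h2 : φ x A - B = 0 := by
    calc φ x A - B
        = 0 + (-B + η x B • ξ x) - 0 - (0 - φ x A) + -(η x B • ξ x) := by abel
      _ = 0 := hnorm
  have : φ x A = B := sub_eq_zero.1 h2
  exact this
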